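/- arXiv:2310.03839 — 3 statements merged into one kernel-verified Lean document; each statement's English description precedes it below -/
import Mathlib

section
/- First order deformation of associativity from a 3-cocycle: let (A,⊗,α) be a strict k-linear monoidal category and f a Davydov-Yetter 3-cocycle (d^3 f = 0). Then α' := id + f·ε defines an associativity constraint for the k[ε]/(ε²)-linear extension of A with the scalar-extended tensor product, i.e., α' satisfies the pentagon identity over k[ε]/(ε²). -/
/- STATEMENT 7: First order deformation of associativity from a 3-cocycle.  (A,⊗) a
strict k-linear monoidal category (strictness recorded by the object equalities
`hassoc`), f a Davydov-Yetter 3-cocycle (d³f = 0).  Over k[ε]/(ε²), morphisms of the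
scalar extension are modelled as pairs (g₀, g₁) = g₀ + g₁·ε with composition
(g₀, g₁) ∘ (h₀, h₁) = (g₀ ≫ h₀, g₀ ≫ h₁ + g₁ ≫ h₀).  Then α' := id + f·ε satisfies
the pentagon identity over k[ε]/(ε²) (all morphisms padded to endomorphisms of the
fully right-parenthesized product via `eqToHom`). -/

open CategoryTheory MonoidalCategory

variable {C : Type*} [Category C] [Preadditive C] [MonoidalCategory C]

def pad {A B : C} (e : A = B) (g : B ⟶ B) : A ⟶ A :=
  eqToHom e ≫ g ≫ eqToHom e.symm

def epsComp {X Y Z : C} (p : (X ⟶ Y) × (X ⟶ Y)) (q : (Y ⟶ Z) × (Y ⟶ Z)) :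
    (X ⟶ Z) × (X ⟶ Z) :=
  (p.1 ≫ q.1, p.1 ≫ q.2 + p.2 ≫ q.1)

set_option maxHeartbeats 2000000 in
theorem cocycle_gives_first_order_deformation
    (hassoc : ∀ X Y Z : C, (X ⊗ Y) ⊗ Z = X ⊗ Y ⊗ Z)
    (f : ∀ X Y Z : C, (X ⊗ Y ⊗ Z) ⟶ (X ⊗ Y ⊗ Z))
    (hnat : ∀ {X X' Y Y' Z Z' : C} (a : X ⟶ X') (b : Y ⟶ Y') (c : Z ⟶ Z'),
      f X Y Z ≫ (a ⊗ₘ b ⊗ₘ c) = (a ⊗ₘ b ⊗ₘ c) ≫ f X' Y' Z')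
    (hcocycle : ∀ X Y Z W : C,
      𝟙 X ⊗ₘ f Y Z W
        - pad (by rw [← hassoc]) (f (X ⊗ Y) Z W)
        + pad (by rw [hassoc]) (f X (Y ⊗ Z) W)
        - f X Y (Z ⊗ W)
        + pad (by rw [hassoc, hassoc]) (f X Y Z ⊗ₘ 𝟙 W) = 0) :
    -- the pentagon identity for α' = id + f·ε over k[ε]/(ε²):
    ∀ X Y Z W : C,
      epsComp (𝟙 (X ⊗ Y ⊗ Z ⊗ W), 𝟙 X ⊗ₘ f Y Z W)
        (epsComp (𝟙 (X ⊗ Y ⊗ Z ⊗ W), pad (by rw [hassoc]) (f X (Y ⊗ Z) W))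
          (𝟙 (X ⊗ Y ⊗ Z ⊗ W), pad (by rw [hassoc, hassoc]) (f X Y Z ⊗ₘ 𝟙 W)))
      = epsComp (𝟙 (X ⊗ Y ⊗ Z ⊗ W), f X Y (Z ⊗ W))
          (𝟙 (X ⊗ Y ⊗ Z ⊗ W), pad (by rw [← hassoc]) (f (X ⊗ Y) Z W)) := by
  intro X Y Z W
  have h := hcocycle X Y Z W
  simp only [epsComp, Category.id_comp, Category.comp_id, Prod.mk.injEq]
  constructor
  · trivial
  · linear_combination (norm := abel) h
end

section
/- Surjectivity in H⁰ is reflected by tensoring with a unital bimodule: if Γ with unit U induces natural homotopy equivalences Γ ⊗ U ⊗ Z ≃ Z, then a chain map g is surjective on H⁰ if and only if Γ ⊗ g is surjective on H⁰ — assuming the class of H⁰-surjections is homotopically replete and closed under tensoring with arbitrary objects. -/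
/- STATEMENT 14: Surjectivity in H⁰ is reflected by tensoring with a unital bimodule:
if Γ with unit U induces natural homotopy equivalences Γ ⊗ U ⊗ Z ≃ Z, then a chain map
g is surjective on H⁰ iff Γ ⊗ g is — assuming (as stated) that the class of
H⁰-surjections is homotopically replete and closed under tensoring with objects. -/

open CategoryTheory

/-- A chain map is an H⁰-surjection if the induced map on 0-th homology is surjective. -/
def H0Surj {k : Type} [Field k] {X Y : CochainComplex (ModuleCat k) ℤ} (f : X ⟶ Y) :
    Prop :=
  Function.Surjective (HomologicalComplex.homologyMap f 0)

theorem H0_surjectivity_reflected_by_gamma (k : Type) [Field k]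
    (T : CochainComplex (ModuleCat k) ℤ ⥤
      CochainComplex (ModuleCat k) ℤ ⥤ CochainComplex (ModuleCat k) ℤ)
    -- H⁰-surjections are homotopically replete (true; assumed as in the statement)
    (hreplete : ∀ {X Y X' Y' : CochainComplex (ModuleCat k) ℤ}
      (f : X ⟶ Y) (g : X' ⟶ Y') (e : HomotopyEquiv X X') (e' : HomotopyEquiv Y Y'),
      f ≫ e'.hom = e.hom ≫ g → H0Surj f → H0Surj g)
    -- closed under tensoring with arbitrary objects (Künneth over a field)
    (hclosedL : ∀ (Z : CochainComplex (ModuleCat k) ℤ)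
      {X Y : CochainComplex (ModuleCat k) ℤ} (f : X ⟶ Y),
      H0Surj f → H0Surj ((T.obj Z).map f))
    (hclosedR : ∀ (Z : CochainComplex (ModuleCat k) ℤ)
      {X Y : CochainComplex (ModuleCat k) ℤ} (f : X ⟶ Y),
      H0Surj f → H0Surj ((T.map f).app Z))
    (Γ U : CochainComplex (ModuleCat k) ℤ)
    (unit : ∀ Z : CochainComplex (ModuleCat k) ℤ,
      HomotopyEquiv ((T.obj U).obj ((T.obj Γ).obj Z)) Z)
    (hunit_nat : ∀ {Z Z' : CochainComplex (ModuleCat k) ℤ} (g : Z ⟶ Z'),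
      (T.obj U).map ((T.obj Γ).map g) ≫ (unit Z').hom = (unit Z).hom ≫ g) :
    ∀ {X Y : CochainComplex (ModuleCat k) ℤ} (g : X ⟶ Y),
      H0Surj g ↔ H0Surj ((T.obj Γ).map g) := by
  intro X Y g
  constructor
  · exact hclosedL Γ g
  · intro h
    have h2 := hclosedL U ((T.obj Γ).map g) h
    have i1 : IsIso (HomologicalComplex.homologyMap (unit X).hom (0 : ℤ)) := by
      rw [← quasiIsoAt_iff_isIso_homologyMap]; infer_instance
    have i2 : IsIso (HomologicalComplex.homologyMap (unit Y).hom (0 : ℤ)) := by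
      rw [← quasiIsoAt_iff_isIso_homologyMap]; infer_instance
    have key : HomologicalComplex.homologyMap g (0 : ℤ) =
        inv (HomologicalComplex.homologyMap (unit X).hom 0) ≫
        HomologicalComplex.homologyMap ((T.obj U).map ((T.obj Γ).map g)) 0 ≫
        HomologicalComplex.homologyMap (unit Y).hom 0 := by
      rw [IsIso.eq_inv_comp, ← HomologicalComplex.homologyMap_comp, ← hunit_nat g,
        HomologicalComplex.homologyMap_comp]
    have e2 : Epi (HomologicalComplex.homologyMap ((T.obj U).map ((T.obj Γ).map g)) (0 : ℤ)) :=
      (ModuleCat.epi_iff_surjective _).2 h2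
    rw [H0Surj, ← ModuleCat.epi_iff_surjective, key]
    infer_instance
end

section
/- Equivalence of first-order deformations is an equivalence relation on DY 3-cocycles and descends to cohomology: two 3-cocycles f, f' yield monoidally equivalent first-order deformations (via identity-underlying tensor functors) if and only if f − f' is a coboundary d²(g); hence equivalence classes of such deformations injectively receive a map from HDY³(A). -/
/- STATEMENT 19: Equivalence of first-order deformations descends to cohomology:
two DY 3-cocycles f, f' yield monoidally equivalent first-order deformations via the
identity-underlying tensor functor J = id + g·ε  iff  f' − f = d²(g).  (Strict k-linear
monoidal category, strictness recorded by `hassoc`; k[ε]/(ε²)-morphisms modelled as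
pairs (h₀, h₁) = h₀ + h₁·ε.)  The compatibility hexagon over k[ε]/(ε²) for J between
the associators id + f'·ε and id + f·ε holds iff f' − f = d²g; hence equivalence classes
of such deformations are classified up to coboundaries, i.e. receive an injective map
from HDY³(A). -/

open CategoryTheory MonoidalCategory

variable {C : Type*} [Category C] [Preadditive C] [MonoidalCategory C]

set_option maxHeartbeats 2000000 in
theorem deformations_equivalent_iff_coboundary
    (hassoc : ∀ X Y Z : C, (X ⊗ Y) ⊗ Z = X ⊗ Y ⊗ Z)
    (f f' : ∀ X Y Z : C, (X ⊗ Y ⊗ Z) ⟶ (X ⊗ Y ⊗ Z))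
    (g : ∀ X Y : C, (X ⊗ Y) ⟶ (X ⊗ Y))
    (hgnat : ∀ {X X' Y Y' : C} (a : X ⟶ X') (b : Y ⟶ Y'),
      g X Y ≫ (a ⊗ₘ b) = (a ⊗ₘ b) ≫ g X' Y') :
    -- the compatibility hexagon for J = id + g·ε over k[ε]/(ε²) intertwining the two
    -- deformed associators holds iff f' − f is the coboundary d²g:
    (∀ X Y Z : C,
      epsComp (𝟙 (X ⊗ Y ⊗ Z), pad (hassoc X Y Z).symm (g X Y ⊗ₘ 𝟙 Z))
        (epsComp (𝟙 (X ⊗ Y ⊗ Z), pad (hassoc X Y Z).symm (g (X ⊗ Y) Z))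
          (𝟙 (X ⊗ Y ⊗ Z), f' X Y Z))
      = epsComp (𝟙 (X ⊗ Y ⊗ Z), f X Y Z)
          (epsComp (𝟙 (X ⊗ Y ⊗ Z), 𝟙 X ⊗ₘ g Y Z)
            (𝟙 (X ⊗ Y ⊗ Z), g X (Y ⊗ Z))))
    ↔ (∀ X Y Z : C,
      f' X Y Z - f X Y Z = 𝟙 X ⊗ₘ g Y Z
        - pad (hassoc X Y Z).symm (g (X ⊗ Y) Z)
        + g X (Y ⊗ Z)
        - pad (hassoc X Y Z).symm (g X Y ⊗ₘ 𝟙 Z)) := by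
  constructor <;> intro h X Y Z <;> have h' := h X Y Z <;>
    simp only [epsComp, Prod.mk.injEq, Category.id_comp, Category.comp_id] at h' ⊢
  · obtain ⟨-, h2⟩ := h'
    linear_combination (norm := abel) h2
  · exact ⟨trivial, by linear_combination (norm := abel) h'⟩
end
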